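/- Let G be a countable abelian group acting ergodically and measure-preservingly on a probability space (X,μ), with a sequence (F_n) of finite subsets of G along which pointwise ergodic averages converge almost everywhere to the space average for every bounded measurable function. Then for all measurable A, B ⊆ X of positive measure, the lower asymptotic density of R_{A,B} = {g : μ(A ∩ g⁻¹B) > 0} along (F_n) satisfies d̲(R_{A,B}) ≥ max(μ(A), μ(B)). -/

import Mathlib

open MeasureTheory
open scoped Classical

theorem stmt11 {G X : Type*} [AddCommGroup G] [Countable G]
    [MeasurableSpace X] (μ : Measure X) [IsProbabilityMeasure μ]
    (T : G → X → X)
    (hT0 : ∀ x, T 0 x = x)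
    (hTadd : ∀ g h x, T (g + h) x = T g (T h x))
    (hTmp : ∀ g, MeasurePreserving (T g) μ μ)
    (herg : ∀ S : Set X, MeasurableSet S → (∀ g, T g ⁻¹' S = S) → μ S = 0 ∨ μ S = 1)
    (F : ℕ → Finset G) (hFne : ∀ n, (F n).Nonempty)
    (hF : ∀ φ : X → ℝ, Measurable φ → (∃ C, ∀ x, |φ x| ≤ C) →
      ∀ᵐ x ∂μ, Filter.Tendsto
        (fun n => (∑ g ∈ F n, φ (T g x)) / ((F n).card : ℝ))
        Filter.atTop (nhds (∫ x, φ x ∂μ)))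
    (A B : Set X) (hA : MeasurableSet A) (hB : MeasurableSet B)
    (hApos : 0 < μ A) (hBpos : 0 < μ B) :
    max (μ A).toReal (μ B).toReal ≤
      Filter.liminf
        (fun n => (((F n).filter (fun g => 0 < μ (A ∩ T g ⁻¹' B))).card : ℝ) / ((F n).card : ℝ))
        Filter.atTop := by
  have hTg : ∀ g : G, Measurable (T g) := fun g => (hTmp g).measurable
  set a := (μ A).toReal with ha
  set b := (μ B).toReal with hb
  have hapos : 0 < a := ENNReal.toReal_pos hApos.ne' (measure_ne_top μ A)
  have hbpos : 0 < b := ENNReal.toReal_pos hBpos.ne' (measure_ne_top μ B)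
  set m := min a b with hm
  have hmpos : 0 < m := lt_min hapos hbpos
  set φ : X → ℝ := B.indicator 1 with hφ
  have hφmeas : Measurable φ := measurable_const.indicator hB
  have hφbd : ∀ x, |φ x| ≤ 1 := by
    intro x; by_cases h : x ∈ B <;> simp [hφ, Set.indicator_apply, h]
  have hφint : ∫ x, φ x ∂μ = b := integral_indicator_one hB
  have hae := hF φ hφmeas ⟨1, hφbd⟩
  rw [hφint] at hae
  -- the sequence of functions
  set f : ℕ → X → ℝ :=
    fun n x => A.indicator 1 x * ((∑ g ∈ F n, φ (T g x)) / ((F n).card : ℝ)) with hf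
  have hcardpos : ∀ n, 0 < ((F n).card : ℝ) := fun n => by
    exact_mod_cast Finset.card_pos.mpr (hFne n)
  -- measurability of each f n
  have hfmeas : ∀ n, Measurable (f n) := by
    intro n
    exact (measurable_const.indicator hA).mul
      ((Finset.measurable_sum (F n) fun g _ => hφmeas.comp (hTg g)).div_const _)
  -- bound |f n x| ≤ 1
  have hfbd : ∀ n x, |f n x| ≤ 1 := by
    intro n x
    have h1 : |A.indicator (1 : X → ℝ) x| ≤ 1 := by
      by_cases h : x ∈ A <;> simp [Set.indicator_apply, h]
    have h2 : |(∑ g ∈ F n, φ (T g x)) / ((F n).card : ℝ)| ≤ 1 := by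
      rw [abs_div, abs_of_pos (hcardpos n), div_le_one (hcardpos n)]
      calc |∑ g ∈ F n, φ (T g x)| ≤ ∑ g ∈ F n, |φ (T g x)| := Finset.abs_sum_le_sum_abs _ _
        _ ≤ ∑ g ∈ F n, 1 := Finset.sum_le_sum fun g _ => hφbd _
        _ = ((F n).card : ℝ) := by simp
    have : |f n x| = |A.indicator (1 : X → ℝ) x| *
        |(∑ g ∈ F n, φ (T g x)) / ((F n).card : ℝ)| := by
      rw [hf]; exact abs_mul _ _
    rw [this]
    calc |A.indicator (1 : X → ℝ) x| * |(∑ g ∈ F n, φ (T g x)) / ((F n).card : ℝ)|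
        ≤ 1 * 1 := mul_le_mul h1 h2 (abs_nonneg _) zero_le_one
      _ = 1 := one_mul 1
  -- each summand is integrable and its integral is μ(A ∩ T g⁻¹ B)
  have hterm_eq : ∀ g : G,
      (fun x => A.indicator 1 x * φ (T g x)) = (A ∩ T g ⁻¹' B).indicator (1 : X → ℝ) := by
    intro g
    funext x
    by_cases h1 : x ∈ A <;> by_cases h2 : T g x ∈ B <;>
      simp [Set.indicator_apply, hφ, h1, h2, Set.mem_preimage]
  have hterm_int : ∀ g : G, Integrable (fun x => A.indicator 1 x * φ (T g x)) μ := by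
    intro g
    rw [hterm_eq g]
    exact (integrable_const (1 : ℝ)).indicator (hA.inter ((hTg g) hB))
  have hterm_val : ∀ g : G,
      ∫ x, A.indicator 1 x * φ (T g x) ∂μ = (μ (A ∩ T g ⁻¹' B)).toReal := by
    intro g
    rw [hterm_eq g]
    exact integral_indicator_one (hA.inter ((hTg g) hB))
  -- the integral of f n
  have hIn : ∀ n, ∫ x, f n x ∂μ =
      (∑ g ∈ F n, (μ (A ∩ T g ⁻¹' B)).toReal) / ((F n).card : ℝ) := by
    intro n
    have h1 : ∀ x, f n x = (∑ g ∈ F n, A.indicator 1 x * φ (T g x)) / ((F n).card : ℝ) := by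
      intro x
      simp only [hf]
      rw [← mul_div_assoc, Finset.mul_sum]
    calc ∫ x, f n x ∂μ
        = ∫ x, (∑ g ∈ F n, A.indicator 1 x * φ (T g x)) / ((F n).card : ℝ) ∂μ :=
          integral_congr_ae (Filter.Eventually.of_forall h1)
      _ = (∫ x, ∑ g ∈ F n, A.indicator 1 x * φ (T g x) ∂μ) / ((F n).card : ℝ) :=
          integral_div _ _
      _ = (∑ g ∈ F n, ∫ x, A.indicator 1 x * φ (T g x) ∂μ) / ((F n).card : ℝ) := by
          rw [integral_finset_sum _ fun g _ => hterm_int g]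
      _ = _ := by simp_rw [hterm_val]
  -- dominated convergence
  have hlimfun : ∫ x, A.indicator 1 x * b ∂μ = a * b := by
    rw [integral_mul_const, integral_indicator_one hA]; rfl
  have hDC : Filter.Tendsto (fun n => ∫ x, f n x ∂μ) Filter.atTop (nhds (a * b)) := by
    rw [← hlimfun]
    apply tendsto_integral_of_dominated_convergence (fun _ => (1 : ℝ))
      (fun n => (hfmeas n).aestronglyMeasurable) (integrable_const 1)
      (fun n => Filter.Eventually.of_forall fun x => by
        simpa [Real.norm_eq_abs] using hfbd n x)
    filter_upwards [hae] with x hx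
    exact hx.const_mul _
  -- comparison with the density ratio
  set c : ℕ → ℝ :=
    fun n => (((F n).filter (fun g => 0 < μ (A ∩ T g ⁻¹' B))).card : ℝ) / ((F n).card : ℝ)
    with hc
  have hcnonneg : ∀ n, 0 ≤ c n := fun n => div_nonneg (Nat.cast_nonneg _) (Nat.cast_nonneg _)
  have hIle : ∀ n, ∫ x, f n x ∂μ ≤ m * c n := by
    intro n
    rw [hIn n, hc]
    have hsum : ∑ g ∈ F n, (μ (A ∩ T g ⁻¹' B)).toReal
        ≤ m * (((F n).filter (fun g => 0 < μ (A ∩ T g ⁻¹' B))).card : ℝ) := by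
      have hfilter : ∑ g ∈ (F n).filter (fun g => 0 < μ (A ∩ T g ⁻¹' B)),
          (μ (A ∩ T g ⁻¹' B)).toReal = ∑ g ∈ F n, (μ (A ∩ T g ⁻¹' B)).toReal := by
        apply Finset.sum_filter_of_ne
        intro g _ hne
        have : μ (A ∩ T g ⁻¹' B) ≠ 0 := by
          intro h0; apply hne; rw [h0]; simp
        exact this.bot_lt
      rw [← hfilter]
      have hle : ∀ g ∈ (F n).filter (fun g => 0 < μ (A ∩ T g ⁻¹' B)),
          (μ (A ∩ T g ⁻¹' B)).toReal ≤ m := by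
        intro g _
        apply le_min
        · exact ENNReal.toReal_mono (measure_ne_top μ A)
            (measure_mono Set.inter_subset_left)
        · have : μ (T g ⁻¹' B) = μ B := (hTmp g).measure_preimage hB.nullMeasurableSet
          calc (μ (A ∩ T g ⁻¹' B)).toReal ≤ (μ (T g ⁻¹' B)).toReal :=
              ENNReal.toReal_mono (by rw [this]; exact measure_ne_top μ B)
                (measure_mono Set.inter_subset_right)
            _ = b := by rw [this]
      calc ∑ g ∈ (F n).filter (fun g => 0 < μ (A ∩ T g ⁻¹' B)), (μ (A ∩ T g ⁻¹' B)).toReal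
          ≤ ((F n).filter (fun g => 0 < μ (A ∩ T g ⁻¹' B))).card • m :=
            Finset.sum_le_card_nsmul _ _ m hle
        _ = m * _ := by rw [nsmul_eq_mul, mul_comm]
    rw [div_le_iff₀ (hcardpos n)]
    calc ∑ g ∈ F n, (μ (A ∩ T g ⁻¹' B)).toReal ≤ m * _ := hsum
      _ = m * (_ / ((F n).card : ℝ)) * ((F n).card : ℝ) := by
        field_simp
  -- conclude via liminf
  have hdiv : Filter.Tendsto (fun n => (∫ x, f n x ∂μ) / m) Filter.atTop (nhds (a * b / m)) :=
    hDC.div_const m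
  have hliminf_eq : Filter.liminf (fun n => (∫ x, f n x ∂μ) / m) Filter.atTop = a * b / m :=
    hdiv.liminf_eq
  have hmono : Filter.liminf (fun n => (∫ x, f n x ∂μ) / m) Filter.atTop
      ≤ Filter.liminf c Filter.atTop := by
    apply Filter.liminf_le_liminf
    · exact Filter.Eventually.of_forall fun n =>
        (div_le_iff₀ hmpos).mpr (by rw [mul_comm]; exact hIle n)
    · exact hdiv.isBoundedUnder_ge
    · exact Filter.isCoboundedUnder_ge_of_le Filter.atTop fun n =>
        div_le_one_of_le₀ (by exact_mod_cast Finset.card_filter_le _ _) (le_of_lt (hcardpos n))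
  have hmaxeq : max a b = a * b / m := by
    rw [eq_div_iff hmpos.ne', hm, max_mul_min]
  rw [hmaxeq, ← hliminf_eq]
  exact hmono
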